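/- Let ρ, β > 0, A > 0, v ∈ ℝ, and 0 < ε·A₀ < A, and set γ² = (1/A)·∫_{εA₀}^{A} c²(a) da with c²(a) = (β/(2ρ))·√a, γ > 0. Then the second moment of the kinetic density M(ξ) = (A/γ)·χ((ξ − v)/γ) is ∫_ℝ ξ²·M(ξ) dξ = A·v² + (β/(3ρ))·( A^{3/2} − (εA₀)^{3/2} ). -/

import Mathlib

open MeasureTheory Real

/-- The kinetic kernel χ(ω) = 1/(2√3) for |ω| ≤ √3 and 0 otherwise. -/
noncomputable def chi (ω : ℝ) : ℝ :=
  if |ω| ≤ Real.sqrt 3 then 1 / (2 * Real.sqrt 3) else 0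

theorem kinetic_second_moment_arterial (ρ β A v γ ε A₀ : ℝ)
    (hρ : 0 < ρ) (hβ : 0 < β) (hA : 0 < A)
    (hεA₀ : 0 < ε * A₀) (hεA₀A : ε * A₀ < A) (hγ : 0 < γ)
    (hγsq : γ ^ 2 = (1 / A) * ∫ a in (ε * A₀)..A, (β / (2 * ρ)) * Real.sqrt a)
    (M : ℝ → ℝ) (hM : ∀ ξ, M ξ = (A / γ) * chi ((ξ - v) / γ)) :
    (∫ ξ : ℝ, ξ ^ 2 * M ξ) =
      A * v ^ 2 + (β / (3 * ρ)) * (A ^ ((3 : ℝ) / 2) - (ε * A₀) ^ ((3 : ℝ) / 2)) := by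
  have h3 : (0:ℝ) < Real.sqrt 3 := Real.sqrt_pos.mpr (by norm_num)
  set s : ℝ := Real.sqrt 3 * γ with hs
  have hspos : 0 < s := mul_pos h3 hγ
  set c : ℝ := A / γ * (1 / (2 * Real.sqrt 3)) with hc
  -- Step 1: rewrite integrand as indicator
  have key : (fun ξ : ℝ => ξ ^ 2 * M ξ) =
      Set.indicator (Set.Icc (v - s) (v + s)) (fun ξ => c * ξ ^ 2) := by
    funext ξ
    rw [hM ξ, chi]
    by_cases h : |(ξ - v) / γ| ≤ Real.sqrt 3
    · have hmem : ξ ∈ Set.Icc (v - s) (v + s) := by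
        rw [abs_div, abs_of_pos hγ, div_le_iff₀ hγ] at h
        rw [Set.mem_Icc]
        constructor <;> [linarith [neg_abs_le (ξ - v)]; linarith [le_abs_self (ξ - v)]]
      rw [if_pos h, Set.indicator_of_mem hmem]; ring
    · have hmem : ξ ∉ Set.Icc (v - s) (v + s) := by
        rw [abs_div, abs_of_pos hγ, not_le, lt_div_iff₀ hγ] at h
        rw [Set.mem_Icc]
        rcases abs_cases (ξ - v) with ⟨he, _⟩ | ⟨he, _⟩
        · intro ⟨_, h2⟩; nlinarith
        · intro ⟨h1, _⟩; nlinarith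
      rw [if_neg h, Set.indicator_of_notMem hmem]; ring
  rw [key, MeasureTheory.integral_indicator measurableSet_Icc,
    MeasureTheory.integral_Icc_eq_integral_Ioc,
    ← intervalIntegral.integral_of_le (by linarith),
    intervalIntegral.integral_const_mul, integral_pow]
  -- Step 2: evaluate γ² term
  have hγ2 : A * γ ^ 2 = (β / (3 * ρ)) * (A ^ ((3:ℝ)/2) - (ε * A₀) ^ ((3:ℝ)/2)) := by
    have hint : (∫ a in (ε * A₀)..A, (β / (2 * ρ)) * Real.sqrt a)
        = (β / (2 * ρ)) * ((A ^ ((3:ℝ)/2) - (ε * A₀) ^ ((3:ℝ)/2)) / (3/2)) := by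
      rw [intervalIntegral.integral_const_mul]
      congr 1
      simp_rw [Real.sqrt_eq_rpow]
      rw [integral_rpow (Or.inl (by norm_num))]
      norm_num
    rw [hγsq, hint]
    field_simp
  have h2 : c * ((v + s) ^ 3 / 3 - (v - s) ^ 3 / 3) = A * v ^ 2 + A * γ ^ 2 := by
    have hsq : s ^ 2 = 3 * γ ^ 2 := by
      rw [hs, mul_pow, Real.sq_sqrt (by norm_num : (3:ℝ) ≥ 0)]
    have hcs : c * (2 * s) = A := by
      rw [hc, hs]
      field_simp
    nlinarith [hcs, hsq]
  rw [show ((2:ℕ):ℝ) + 1 = 3 by norm_num]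
  rw [← hγ2]
  nlinarith [h2]
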